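/- arXiv:1410.3888 — 3 statements merged into one kernel-verified Lean document; each statement's English description precedes it below -/
import Mathlib

section
/- Let f:[a,b] → ℂ be continuously differentiable with f(a) = f(b) = 0. Then ∫_a^b |f(x)|² dx ≤ ((b−a)/π)² ∫_a^b |f′(x)|² dx. -/
open MeasureTheory intervalIntegral Real Filter Topology Set

private lemma sq_div_sin_tendsto (c p : ℝ) (hc : c ≠ 0) {g : ℝ → ℝ} {d : ℝ}
    (hg : HasDerivAt g d p) (hgp : g p = 0) {s : Set ℝ}
    (hs : ∀ x ∈ s, x ≠ p ∧ Real.sin (c * (x - p)) ≠ 0) :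
    Tendsto (fun x => g x ^ 2 / Real.sin (c * (x - p))) (𝓝[s] p) (𝓝 0) := by
  have hsub : s ⊆ {p}ᶜ := fun x hx => (hs x hx).1
  have h1 : Tendsto (fun x => g x / (x - p)) (𝓝[s] p) (𝓝 d) := by
    have := hasDerivAt_iff_tendsto_slope.mp hg
    have h2 := this.mono_left (nhdsWithin_mono p hsub)
    refine h2.congr' ?_
    filter_upwards [self_mem_nhdsWithin] with x hx
    simp [slope_def_field, hgp, div_eq_div_iff]
  have hq : Tendsto (fun x => c * (x - p)) (𝓝[s] p) (𝓝[≠] 0) := by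
    rw [tendsto_nhdsWithin_iff]
    constructor
    · have : Tendsto (fun x : ℝ => c * (x - p)) (𝓝 p) (𝓝 (c * (p - p))) :=
        (continuous_const.mul (continuous_id.sub continuous_const)).tendsto p
      simpa using this.mono_left nhdsWithin_le_nhds
    · filter_upwards [self_mem_nhdsWithin] with x hx
      exact mul_ne_zero hc (sub_ne_zero.2 (hs x hx).1)
  have hsin : Tendsto (fun t : ℝ => t / Real.sin t) (𝓝[≠] (0:ℝ)) (𝓝 1) := by
    have h := hasDerivAt_iff_tendsto_slope.mp (Real.hasDerivAt_sin 0)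
    simp only [Real.cos_zero, Real.sin_zero, slope_def_field, sub_zero] at h
    have h2 : Tendsto (fun t : ℝ => Real.sin t / t) (𝓝[≠] (0:ℝ)) (𝓝 1) := by
      refine h.congr fun t => ?_
      simp [slope_def_field]
    have h' := h2.inv₀ one_ne_zero
    simp only [inv_one] at h'
    refine h'.congr fun t => ?_
    rw [inv_div]
  have h2 : Tendsto (fun x => (c * (x - p)) / Real.sin (c * (x - p))) (𝓝[s] p) (𝓝 1) :=
    hsin.comp hq
  have h3 : Tendsto (fun x : ℝ => x - p) (𝓝[s] p) (𝓝 0) := by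
    have : Tendsto (fun x : ℝ => x - p) (𝓝 p) (𝓝 (p - p)) :=
      (continuous_id.sub continuous_const).tendsto p
    simpa using this.mono_left nhdsWithin_le_nhds
  have hT : Tendsto (fun x => ((g x / (x - p)) ^ 2 * (x - p)) *
      ((c * (x - p)) / Real.sin (c * (x - p))) * c⁻¹) (𝓝[s] p) (𝓝 0) := by
    have := (((h1.pow 2).mul h3).mul h2).mul_const c⁻¹
    simpa using this
  refine hT.congr' ?_
  filter_upwards [self_mem_nhdsWithin] with x hx
  have hxp : x - p ≠ 0 := sub_ne_zero.2 (hs x hx).1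
  have hsin' := (hs x hx).2
  field_simp

private lemma wirtinger_real (a b : ℝ) (hab : a < b) (g g' : ℝ → ℝ)
    (hderiv : ∀ x ∈ Set.Icc a b, HasDerivAt g (g' x) x)
    (hcont : ContinuousOn g' (Set.Icc a b))
    (ha : g a = 0) (hb : g b = 0) :
    (Real.pi / (b - a)) ^ 2 * ∫ x in a..b, g x ^ 2 ≤ ∫ x in a..b, g' x ^ 2 := by
  have hba : b - a ≠ 0 := sub_ne_zero.2 hab.ne'
  set c : ℝ := Real.pi / (b - a) with hcdef
  have hc : 0 < c := div_pos Real.pi_pos (by linarith)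
  have hcba : c * (b - a) = Real.pi := by rw [hcdef]; exact div_mul_cancel₀ _ hba
  set m : ℝ := (a + b) / 2 with hmdef
  have hgcont : ContinuousOn g (Set.Icc a b) := fun x hx =>
    (hderiv x hx).continuousAt.continuousWithinAt
  set φ : ℝ → ℝ := fun x => g' x ^ 2 - c ^ 2 * g x ^ 2 with hφdef
  have hφcont : ContinuousOn φ (Set.Icc a b) :=
    (hcont.pow 2).sub ((hgcont.pow 2).const_smul (c ^ 2))
  set w : ℝ → ℝ := fun x => c * Real.tan (c * (x - m)) with hwdef
  set P : ℝ → ℝ := fun y => ∫ t in a..y, φ t with hPdef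
  set G : ℝ → ℝ := fun x => w x * g x ^ 2 with hGdef
  set H : ℝ → ℝ := fun x => P x + G x with hHdef
  -- derivative of H on the open interval
  have hcos : ∀ x ∈ Set.Ioo a b, Real.cos (c * (x - m)) ≠ 0 := by
    intro x hx
    have h1 : -(Real.pi / 2) < c * (x - m) := by nlinarith [hx.1, hx.2, hc.le, hcba]
    have h2 : c * (x - m) < Real.pi / 2 := by nlinarith [hx.1, hx.2, hc.le, hcba]
    exact (Real.cos_pos_of_mem_Ioo ⟨h1, h2⟩).ne'
  have hH : ∀ x ∈ Set.Ioo a b, HasDerivAt H ((g' x + w x * g x) ^ 2) x := by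
    intro x hx
    have hxIcc : x ∈ Set.Icc a b := ⟨hx.1.le, hx.2.le⟩
    have hgx := hderiv x hxIcc
    have hP : HasDerivAt P (φ x) x := by
      refine intervalIntegral.integral_hasDerivAt_right ?_ ?_ ?_
      · exact (hφcont.mono (Set.Icc_subset_Icc le_rfl hx.2.le)).intervalIntegrable_of_Icc hx.1.le
      · exact (hφcont.mono Set.Ioo_subset_Icc_self).stronglyMeasurableAtFilter isOpen_Ioo x hx
      · exact hφcont.continuousAt (Icc_mem_nhds hx.1 hx.2)
    have hu : HasDerivAt (fun y : ℝ => c * (y - m)) c x := by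
      simpa using ((hasDerivAt_id x).sub_const m).const_mul c
    have htan : HasDerivAt (fun y : ℝ => Real.tan (c * (y - m)))
        (1 / Real.cos (c * (x - m)) ^ 2 * c) x :=
      by have := (Real.hasDerivAt_tan (hcos x hx)).comp x hu; exact this
    have hw : HasDerivAt w (c * (1 / Real.cos (c * (x - m)) ^ 2 * c)) x := htan.const_mul c
    have hG : HasDerivAt G (c * (1 / Real.cos (c * (x - m)) ^ 2 * c) * g x ^ 2 +
        w x * (2 * g x ^ 1 * g' x)) x := hw.mul (hgx.pow 2)
    have hkey : φ x + (c * (1 / Real.cos (c * (x - m)) ^ 2 * c) * g x ^ 2 +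
        w x * (2 * g x ^ 1 * g' x)) = (g' x + w x * g x) ^ 2 := by
      have hpy : Real.sin (c * (x - m)) ^ 2 + Real.cos (c * (x - m)) ^ 2 = 1 :=
        Real.sin_sq_add_cos_sq _
      have hco := hcos x hx
      have htan2 : Real.tan (c * (x - m)) ^ 2 = 1 / Real.cos (c * (x - m)) ^ 2 - 1 := by
        rw [Real.tan_eq_sin_div_cos, div_pow]
        field_simp
        linear_combination hpy
      have hw2 : w x ^ 2 = c ^ 2 * (1 / Real.cos (c * (x - m)) ^ 2) - c ^ 2 := by
        simp only [hwdef]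
        rw [mul_pow, htan2]
        ring
      simp only [hφdef, hwdef] at hw2 ⊢
      have hcone : Real.cos (c * (x - m)) ^ 2 ≠ 0 := pow_ne_zero _ hco
      field_simp at hw2 ⊢
      linear_combination (-(c ^ 2 * g x ^ 2)) * hw2
    have hsum := hP.add hG
    rw [hkey] at hsum
    exact hsum
  have hmono : MonotoneOn H (Set.Ioo a b) := by
    have hint : interior (Set.Ioo a b) = Set.Ioo a b := interior_Ioo
    refine monotoneOn_of_deriv_nonneg (convex_Ioo a b) ?_ ?_ ?_
    · exact fun x hx => ((hH x hx).continuousAt).continuousWithinAt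
    · rw [hint]; exact fun x hx => ((hH x hx).differentiableAt).differentiableWithinAt
    · rw [hint]; intro x hx; rw [(hH x hx).deriv]; positivity
  -- continuity of P on [a, b]
  have hPcont : ContinuousOn P (Set.Icc a b) := by
    have h1 : IntegrableOn φ (Set.uIcc a b) := by
      rw [Set.uIcc_of_le hab.le]; exact hφcont.integrableOn_Icc
    have := continuousOn_primitive_interval (μ := volume) (f := φ) (a := a) (b := b) h1
    rwa [Set.uIcc_of_le hab.le] at this
  have hPa : Tendsto P (𝓝[Set.Ioo a b] a) (𝓝 0) := by
    have := (hPcont a ⟨le_rfl, hab.le⟩).tendsto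
    simp only [hPdef, intervalIntegral.integral_same] at this
    exact this.mono_left (nhdsWithin_mono a Set.Ioo_subset_Icc_self)
  have hPb : Tendsto P (𝓝[Set.Ioo a b] b) (𝓝 (∫ t in a..b, φ t)) := by
    have := (hPcont b ⟨hab.le, le_rfl⟩).tendsto
    exact this.mono_left (nhdsWithin_mono b Set.Ioo_subset_Icc_self)
  -- G tends to 0 at a
  have hGa : Tendsto G (𝓝[Set.Ioo a b] a) (𝓝 0) := by
    have hsa : ∀ x ∈ Set.Ioo a b, x ≠ a ∧ Real.sin (c * (x - a)) ≠ 0 := by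
      intro x hx
      refine ⟨hx.1.ne', ?_⟩
      have h1 : 0 < c * (x - a) := by nlinarith [hx.1]
      have h2 : c * (x - a) < Real.pi := by nlinarith [hx.2]
      exact (Real.sin_pos_of_pos_of_lt_pi h1 h2).ne'
    have hd := sq_div_sin_tendsto c a hc.ne' (hderiv a ⟨le_rfl, hab.le⟩) ha hsa
    have hcc : Tendsto (fun x => -(c * Real.cos (c * (x - a)))) (𝓝[Set.Ioo a b] a)
        (𝓝 (-(c * 1))) := by
      have : Continuous fun x : ℝ => -(c * Real.cos (c * (x - a))) :=
        (continuous_const.mul (Real.continuous_cos.comp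
          (continuous_const.mul (continuous_id.sub continuous_const)))).neg
      have h := this.tendsto a
      simp only [sub_self, mul_zero, Real.cos_zero] at h
      exact h.mono_left nhdsWithin_le_nhds
    have hT := hcc.mul hd
    rw [mul_zero] at hT
    refine hT.congr' ?_
    filter_upwards [self_mem_nhdsWithin] with x hx
    have heq : c * (x - m) = c * (x - a) - Real.pi / 2 := by
      simp only [hmdef]; linear_combination (-(1:ℝ)/2) * hcba
    simp only [hGdef, hwdef, heq, Real.tan_eq_sin_div_cos, Real.sin_sub_pi_div_two,
      Real.cos_sub_pi_div_two]
    rw [neg_div]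
    ring
  -- G tends to 0 at b
  have hGb : Tendsto G (𝓝[Set.Ioo a b] b) (𝓝 0) := by
    have hsb : ∀ x ∈ Set.Ioo a b, x ≠ b ∧ Real.sin (c * (x - b)) ≠ 0 := by
      intro x hx
      refine ⟨hx.2.ne, ?_⟩
      have h1 : -Real.pi < c * (x - b) := by nlinarith [hx.1]
      have h2 : c * (x - b) < 0 := by nlinarith [hx.2]
      have : Real.sin (c * (x - b)) < 0 := by
        have := Real.sin_pos_of_pos_of_lt_pi (x := -(c * (x - b))) (by linarith) (by linarith)
        rw [Real.sin_neg] at this; linarith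
      exact this.ne
    have hd := sq_div_sin_tendsto c b hc.ne' (hderiv b ⟨hab.le, le_rfl⟩) hb hsb
    have hcc : Tendsto (fun x => -(c * Real.cos (c * (x - b)))) (𝓝[Set.Ioo a b] b)
        (𝓝 (-(c * 1))) := by
      have : Continuous fun x : ℝ => -(c * Real.cos (c * (x - b))) :=
        (continuous_const.mul (Real.continuous_cos.comp
          (continuous_const.mul (continuous_id.sub continuous_const)))).neg
      have h := this.tendsto b
      simp only [sub_self, mul_zero, Real.cos_zero] at h
      exact h.mono_left nhdsWithin_le_nhds
    have hT := hcc.mul hd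
    rw [mul_zero] at hT
    refine hT.congr' ?_
    filter_upwards [self_mem_nhdsWithin] with x hx
    have heq : c * (x - m) = c * (x - b) + Real.pi / 2 := by
      simp only [hmdef]; linear_combination ((1:ℝ)/2) * hcba
    simp only [hGdef, hwdef, heq, Real.tan_eq_sin_div_cos, Real.sin_add_pi_div_two,
      Real.cos_add_pi_div_two]
    rw [div_neg]
    ring
  -- combine limits
  set L : ℝ := ∫ t in a..b, φ t with hLdef
  have hHa : Tendsto H (𝓝[Set.Ioo a b] a) (𝓝 0) := by
    have := hPa.add hGa; simpa using this
  have hHb : Tendsto H (𝓝[Set.Ioo a b] b) (𝓝 L) := by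
    have := hPb.add hGb; simpa using this
  haveI : (𝓝[Set.Ioo a b] a).NeBot := left_nhdsWithin_Ioo_neBot hab
  haveI : (𝓝[Set.Ioo a b] b).NeBot := right_nhdsWithin_Ioo_neBot hab
  have hclaim : ∀ x ∈ Set.Ioo a b, H x ≤ L := by
    intro x hx
    refine ge_of_tendsto hHb ?_
    have h1 : ∀ᶠ y in 𝓝[Set.Ioo a b] b, x < y :=
      (eventually_gt_nhds hx.2).filter_mono nhdsWithin_le_nhds
    filter_upwards [self_mem_nhdsWithin, h1] with y hy hxy
    exact hmono hx hy hxy.le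
  have hL : (0:ℝ) ≤ L := by
    refine le_of_tendsto hHa ?_
    filter_upwards [self_mem_nhdsWithin] with x hx
    exact hclaim x hx
  -- unfold L
  have hg2int : IntervalIntegrable (fun x => g x ^ 2) volume a b := by
    apply ContinuousOn.intervalIntegrable
    rw [Set.uIcc_of_le hab.le]; exact hgcont.pow 2
  have hg'2int : IntervalIntegrable (fun x => g' x ^ 2) volume a b := by
    apply ContinuousOn.intervalIntegrable
    rw [Set.uIcc_of_le hab.le]; exact hcont.pow 2
  have hLsplit : L = (∫ x in a..b, g' x ^ 2) - c ^ 2 * ∫ x in a..b, g x ^ 2 := by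
    rw [hLdef, hφdef]
    rw [intervalIntegral.integral_sub hg'2int (hg2int.const_mul (c ^ 2)),
      intervalIntegral.integral_const_mul]
  rw [hLsplit] at hL
  linarith

/-- Wirtinger's inequality for complex-valued functions vanishing at both endpoints. -/
theorem wirtinger_complex (a b : ℝ) (hab : a < b) (f f' : ℝ → ℂ)
    (hderiv : ∀ x ∈ Set.Icc a b, HasDerivAt f (f' x) x)
    (hcont : ContinuousOn f' (Set.Icc a b))
    (ha : f a = 0) (hb : f b = 0) :
    ∫ x in a..b, ‖f x‖ ^ 2 ≤ ((b - a) / Real.pi) ^ 2 * ∫ x in a..b, ‖f' x‖ ^ 2 := by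
  have hre : ∀ x ∈ Set.Icc a b, HasDerivAt (fun t => (f t).re) ((f' x).re) x := fun x hx =>
    (Complex.reCLM.hasFDerivAt.comp_hasDerivAt x (hderiv x hx))
  have him : ∀ x ∈ Set.Icc a b, HasDerivAt (fun t => (f t).im) ((f' x).im) x := fun x hx =>
    (Complex.imCLM.hasFDerivAt.comp_hasDerivAt x (hderiv x hx))
  have hre_cont : ContinuousOn (fun x => (f' x).re) (Set.Icc a b) :=
    Complex.continuous_re.comp_continuousOn hcont
  have him_cont : ContinuousOn (fun x => (f' x).im) (Set.Icc a b) :=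
    Complex.continuous_im.comp_continuousOn hcont
  have h1 := wirtinger_real a b hab _ _ hre (hre_cont) (by simp [ha]) (by simp [hb])
  have h2 := wirtinger_real a b hab _ _ him (him_cont) (by simp [ha]) (by simp [hb])
  have hfcont : ContinuousOn f (Set.Icc a b) := fun x hx =>
    (hderiv x hx).continuousAt.continuousWithinAt
  have hnorm : ∀ (h : ℝ → ℂ) (x : ℝ), ‖h x‖ ^ 2 = (h x).re ^ 2 + (h x).im ^ 2 := by
    intro h x
    rw [Complex.sq_norm, Complex.normSq_apply]
    ring
  have int_re : IntervalIntegrable (fun x => (f x).re ^ 2) volume a b := by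
    apply ContinuousOn.intervalIntegrable
    rw [Set.uIcc_of_le hab.le]
    exact (Complex.continuous_re.comp_continuousOn hfcont).pow 2
  have int_im : IntervalIntegrable (fun x => (f x).im ^ 2) volume a b := by
    apply ContinuousOn.intervalIntegrable
    rw [Set.uIcc_of_le hab.le]
    exact (Complex.continuous_im.comp_continuousOn hfcont).pow 2
  have int_re' : IntervalIntegrable (fun x => (f' x).re ^ 2) volume a b := by
    apply ContinuousOn.intervalIntegrable
    rw [Set.uIcc_of_le hab.le]
    exact hre_cont.pow 2
  have int_im' : IntervalIntegrable (fun x => (f' x).im ^ 2) volume a b := by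
    apply ContinuousOn.intervalIntegrable
    rw [Set.uIcc_of_le hab.le]
    exact him_cont.pow 2
  have hsplit1 : (∫ x in a..b, ‖f x‖ ^ 2) =
      (∫ x in a..b, (f x).re ^ 2) + ∫ x in a..b, (f x).im ^ 2 := by
    rw [← intervalIntegral.integral_add int_re int_im]
    exact intervalIntegral.integral_congr fun x _ => hnorm f x
  have hsplit2 : (∫ x in a..b, ‖f' x‖ ^ 2) =
      (∫ x in a..b, (f' x).re ^ 2) + ∫ x in a..b, (f' x).im ^ 2 := by
    rw [← intervalIntegral.integral_add int_re' int_im']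
    exact intervalIntegral.integral_congr fun x _ => hnorm f' x
  have hπ : (Real.pi / (b - a)) ^ 2 > 0 := by
    have : (0:ℝ) < b - a := by linarith
    positivity
  have key : (Real.pi / (b - a)) ^ 2 * ∫ x in a..b, ‖f x‖ ^ 2 ≤ ∫ x in a..b, ‖f' x‖ ^ 2 := by
    rw [hsplit1, hsplit2, mul_add]
    linarith
  have hid : ((b - a) / Real.pi) ^ 2 * ((Real.pi / (b - a)) ^ 2 *
      ∫ x in a..b, ‖f x‖ ^ 2) = ∫ x in a..b, ‖f x‖ ^ 2 := by
    have hba : b - a ≠ 0 := sub_ne_zero.2 hab.ne'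
    have hπ' : Real.pi ≠ 0 := Real.pi_ne_zero
    field_simp
  calc (∫ x in a..b, ‖f x‖ ^ 2)
      = ((b - a) / Real.pi) ^ 2 * ((Real.pi / (b - a)) ^ 2 * ∫ x in a..b, ‖f x‖ ^ 2) := hid.symm
    _ ≤ ((b - a) / Real.pi) ^ 2 * ∫ x in a..b, ‖f' x‖ ^ 2 := by
        apply mul_le_mul_of_nonneg_left key (by positivity)
end

section
/- Let a = t_0 ≤ t_1 ≤ ... ≤ t_N ≤ t_{N+1} = b be real numbers, and let f:[a,b] → ℂ be continuously differentiable with f(t_n) = 0 for all n = 1,...,N and f(a) = f(b) = 0. If t_{n+1} − t_n ≤ δ for all n = 0,...,N, then ∫_a^b |f(t)|² dt ≤ (δ/π)² ∫_a^b |f′(t)|² dt. -/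
open MeasureTheory intervalIntegral Real
open Set


lemma deriv_normSq (f f' : ℝ → ℂ) (x : ℝ) (hf : HasDerivAt f (f' x) x) :
    HasDerivAt (fun y => ‖f y‖ ^ 2) (2 * ((starRingEnd ℂ) (f x) * f' x).re) x := by
  have hre : HasDerivAt (fun y => (f y).re) ((f' x).re) x :=
    (Complex.reCLM.hasFDerivAt.comp_hasDerivAt x hf)
  have him : HasDerivAt (fun y => (f y).im) ((f' x).im) x :=
    (Complex.imCLM.hasFDerivAt.comp_hasDerivAt x hf)
  have h : HasDerivAt (fun y => (f y).re * (f y).re + (f y).im * (f y).im)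
      ((f' x).re * (f x).re + (f x).re * (f' x).re + ((f' x).im * (f x).im + (f x).im * (f' x).im)) x :=
    (hre.mul hre).add (him.mul him)
  have heq : (fun y => ‖f y‖ ^ 2) = fun y => (f y).re * (f y).re + (f y).im * (f y).im := by
    ext y; rw [← Complex.normSq_apply, ← Complex.sq_norm]
  rw [heq]
  convert h using 1
  simp [Complex.mul_re]; ring

set_option maxHeartbeats 2000000 in
lemma wirtinger_single (c d : ℝ) (hcd : c < d) (f f' : ℝ → ℂ)
    (hderiv : ∀ x ∈ Set.Icc c d, HasDerivAt f (f' x) x)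
    (hcont : ContinuousOn f' (Set.Icc c d))
    (hc : f c = 0) (hd : f d = 0) :
    (π / (d - c)) ^ 2 * ∫ x in c..d, ‖f x‖ ^ 2 ≤ ∫ x in c..d, ‖f' x‖ ^ 2 := by
  have hL : 0 < d - c := sub_pos.2 hcd
  set k : ℝ := π / (d - c) with hk_def
  have hk : 0 < k := div_pos pi_pos hL
  have hkd : k * (d - c) = π := div_mul_cancel₀ _ hL.ne'
  clear_value k
  set q : ℝ → ℝ := fun x => ‖f x‖ ^ 2 with hq_def
  set s : ℝ → ℝ := fun x => Real.sin (k * (x - c)) with hs_def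
  set co : ℝ → ℝ := fun x => Real.cos (k * (x - c)) with hco_def
  set D : ℝ → ℝ := fun x =>
    k * ((co x / s x) * (2 * ((starRingEnd ℂ) (f x) * f' x).re) - k / (s x) ^ 2 * q x) with hD_def
  set h : ℝ → ℝ := fun x => k * (co x / s x) * q x with hh_def
  -- continuity of f on Icc
  have hfc : ContinuousOn f (Set.Icc c d) := fun x hx =>
    (hderiv x hx).continuousAt.continuousWithinAt
  -- bound on f'
  obtain ⟨M0, hM0⟩ := (isCompact_Icc (a := c) (b := d)).exists_bound_of_continuousOn hcont
  set M : ℝ := max M0 0 with hM_def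
  have hM : 0 ≤ M := le_max_right _ _
  have hM' : ∀ x ∈ Set.Icc c d, ‖f' x‖ ≤ M := fun x hx => (hM0 x hx).trans (le_max_left _ _)
  have hlip : ∀ x ∈ Set.Icc c d, ∀ y ∈ Set.Icc c d, ‖f y - f x‖ ≤ M * ‖y - x‖ := by
    intro x hx y hy
    exact (convex_Icc c d).norm_image_sub_le_of_norm_hasDerivWithin_le
      (fun z hz => (hderiv z hz).hasDerivWithinAt) hM' hx hy
  have hfb1 : ∀ x ∈ Set.Icc c d, ‖f x‖ ≤ M * (x - c) := by
    intro x hx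
    have := hlip c (left_mem_Icc.2 hcd.le) x hx
    rwa [hc, sub_zero, Real.norm_eq_abs, abs_of_nonneg (by linarith [hx.1])] at this
  have hfb2 : ∀ x ∈ Set.Icc c d, ‖f x‖ ≤ M * (d - x) := by
    intro x hx
    have := hlip x hx d (right_mem_Icc.2 hcd.le)
    rwa [hd, zero_sub, norm_neg, Real.norm_eq_abs, abs_of_nonneg (by linarith [hx.2])] at this
  -- positivity of s on the interior
  have hspos : ∀ x ∈ Set.Ioo c d, 0 < s x := by
    intro x hx
    apply Real.sin_pos_of_pos_of_lt_pi
    · exact mul_pos hk (sub_pos.2 hx.1)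
    · calc k * (x - c) < k * (d - c) := by
            apply mul_lt_mul_of_pos_left _ hk; linarith [hx.2]
        _ = π := hkd
  -- key quotient bound
  set B : ℝ := M * π / (2 * k) with hB_def
  have hB : 0 ≤ B := by positivity
  have hquot : ∀ x ∈ Set.Ioo c d, ‖f x‖ ≤ B * s x := by
    intro x hx
    rcases le_or_gt x ((c + d) / 2) with hhalf | hhalf
    · have h1 : 0 ≤ k * (x - c) := by nlinarith [hx.1]
      have h2 : k * (x - c) ≤ π / 2 := by
        have : x - c ≤ (d - c) / 2 := by linarith
        nlinarith
      have hj := Real.mul_le_sin h1 h2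
      calc ‖f x‖ ≤ M * (x - c) := hfb1 x (Ioo_subset_Icc_self hx)
        _ = B * (2 / π * (k * (x - c))) := by
            field_simp [hB_def]; have hB2 : B * (2 * k) = M * π := by rw [hB_def]; exact div_mul_cancel₀ _ (by positivity)
            linear_combination (c - x) * hB2
        _ ≤ B * s x := by
            apply mul_le_mul_of_nonneg_left _ hB
            exact hj
    · have hsx : s x = Real.sin (k * (d - x)) := by
        have : k * (x - c) = π - k * (d - x) := by
          rw [← hkd]; ring
        rw [hs_def]; simp only []
        rw [this, Real.sin_pi_sub]
      have h1 : 0 ≤ k * (d - x) := by nlinarith [hx.2]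
      have h2 : k * (d - x) ≤ π / 2 := by
        have : d - x ≤ (d - c) / 2 := by linarith
        nlinarith
      have hj := Real.mul_le_sin h1 h2
      calc ‖f x‖ ≤ M * (d - x) := hfb2 x (Ioo_subset_Icc_self hx)
        _ = B * (2 / π * (k * (d - x))) := by
            field_simp [hB_def]; have hB2 : B * (2 * k) = M * π := by rw [hB_def]; exact div_mul_cancel₀ _ (by positivity)
            linear_combination (x - d) * hB2
        _ ≤ B * s x := by
            rw [hsx]
            exact mul_le_mul_of_nonneg_left hj hB
  -- h vanishes at the endpoints
  have hsc : s c = 0 := by simp [hs_def]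
  have hsd : s d = 0 := by
    show Real.sin (k * (d - c)) = 0
    rw [hkd, Real.sin_pi]
  have hhc : h c = 0 := by simp [hh_def, hq_def, hc]
  have hhd : h d = 0 := by simp [hh_def, hq_def, hd]
  -- derivative of h at interior points
  have hhderiv : ∀ x ∈ Set.Ioo c d, HasDerivAt h (D x) x := by
    intro x hx
    have hsx : s x ≠ 0 := (hspos x hx).ne'
    have hpy : s x ^ 2 + co x ^ 2 = 1 := Real.sin_sq_add_cos_sq _
    have hinner : HasDerivAt (fun y => k * (y - c)) k x := by
      simpa using ((hasDerivAt_id x).sub_const c).const_mul k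
    have hco' : HasDerivAt co (-s x * k) x := by
      have := (Real.hasDerivAt_cos (k * (x - c))).comp x hinner
      exact this
    have hs' : HasDerivAt s (co x * k) x := by
      have := (Real.hasDerivAt_sin (k * (x - c))).comp x hinner
      exact this
    have hq' : HasDerivAt q (2 * ((starRingEnd ℂ) (f x) * f' x).re) x :=
      deriv_normSq f f' x (hderiv x (Ioo_subset_Icc_self hx))
    have hdiv : HasDerivAt (fun y => co y / s y)
        ((-s x * k * s x - co x * (co x * k)) / (s x) ^ 2) x := hco'.div hs' hsx
    have hnum : (-s x * k * s x - co x * (co x * k)) / (s x) ^ 2 = -(k / s x ^ 2) := by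
      have hnn : -s x * k * s x - co x * (co x * k) = -k := by
        linear_combination (-(k : ℝ)) * hpy
      rw [hnn, neg_div]
    rw [hnum] at hdiv
    have hmain : HasDerivAt (fun y => k * (co y / s y) * q y) _ x := (hdiv.const_mul k).mul hq'
    convert hmain using 1
    show k * ((co x / s x) * (2 * ((starRingEnd ℂ) (f x) * f' x).re) - k / (s x) ^ 2 * q x) = _
    ring
  -- bound on h over the closed interval
  have hhb : ∀ x ∈ Set.Icc c d, |h x| ≤ k * B * ‖f x‖ := by
    intro x hx
    by_cases hxc : x = c
    · subst hxc; rw [hhc, abs_zero]; positivity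
    by_cases hxd : x = d
    · subst hxd; rw [hhd, abs_zero]; positivity
    have hxI : x ∈ Set.Ioo c d := ⟨lt_of_le_of_ne hx.1 (Ne.symm hxc), lt_of_le_of_ne hx.2 hxd⟩
    have hs0 := hspos x hxI
    have hfq := hquot x hxI
    have hqx : q x = ‖f x‖ ^ 2 := rfl
    have habs : |h x| = k * |co x| * q x / s x := by
      show |k * (co x / s x) * q x| = _
      simp only [abs_mul, abs_div, abs_of_pos hk, abs_of_pos hs0,
        abs_of_nonneg (by positivity : (0:ℝ) ≤ q x)]
      ring
    rw [habs, div_le_iff₀ hs0]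
    have hco1 : |co x| ≤ 1 := Real.abs_cos_le_one _
    have hf0 : (0:ℝ) ≤ ‖f x‖ := norm_nonneg _
    nlinarith [mul_le_mul_of_nonneg_left hfq (mul_nonneg hk.le hf0),
      mul_le_mul_of_nonneg_right hco1 (mul_nonneg hk.le (by positivity : (0:ℝ) ≤ q x))]
  -- continuity of h on the closed interval
  have hconth : ContinuousOn h (Set.Icc c d) := by
    intro x hx
    by_cases hxc : x = c
    · subst hxc
      have h0 : Filter.Tendsto (fun y => k * B * ‖f y‖) (nhdsWithin x (Set.Icc x d)) (nhds 0) := by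
        have h1 := (hfc x hx).norm.tendsto
        rw [hc, norm_zero] at h1
        simpa using h1.const_mul (k * B)
      have : Filter.Tendsto h (nhdsWithin x (Set.Icc x d)) (nhds 0) := by
        apply squeeze_zero_norm' _ h0
        filter_upwards [eventually_mem_nhdsWithin] with y hy
        simpa [Real.norm_eq_abs] using hhb y hy
      rw [ContinuousWithinAt, hhc]; exact this
    by_cases hxd : x = d
    · subst hxd
      have h0 : Filter.Tendsto (fun y => k * B * ‖f y‖) (nhdsWithin x (Set.Icc c x)) (nhds 0) := by
        have h1 := (hfc x hx).norm.tendsto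
        rw [hd, norm_zero] at h1
        simpa using h1.const_mul (k * B)
      have : Filter.Tendsto h (nhdsWithin x (Set.Icc c x)) (nhds 0) := by
        apply squeeze_zero_norm' _ h0
        filter_upwards [eventually_mem_nhdsWithin] with y hy
        simpa [Real.norm_eq_abs] using hhb y hy
      rw [ContinuousWithinAt, hhd]; exact this
    have hxI : x ∈ Set.Ioo c d := ⟨lt_of_le_of_ne hx.1 (Ne.symm hxc), lt_of_le_of_ne hx.2 hxd⟩
    have hsx : s x ≠ 0 := (hspos x hxI).ne'
    have hcos : Continuous co := Real.continuous_cos.comp (continuous_const.mul (continuous_id.sub continuous_const))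
    have hsin : Continuous s := Real.continuous_sin.comp (continuous_const.mul (continuous_id.sub continuous_const))
    have hqx : ContinuousAt q x :=
      ((hderiv x hx).continuousAt.norm.pow 2)
    exact ((continuousAt_const.mul ((hcos.continuousAt).div (hsin.continuousAt) hsx)).mul
      hqx).continuousWithinAt
  -- boundedness of D on the open interval
  set C0 : ℝ := k * (2 * B * M + k * B ^ 2) with hC0_def
  have hDb : ∀ x ∈ Set.Ioo c d, |D x| ≤ C0 := by
    intro x hx
    have hs0 := hspos x hx
    have hfq := hquot x hx
    have hf'M := hM' x (Ioo_subset_Icc_self hx)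
    have hqx : q x = ‖f x‖ ^ 2 := rfl
    have hre : |((starRingEnd ℂ) (f x) * f' x).re| ≤ ‖f x‖ * ‖f' x‖ := by
      calc |((starRingEnd ℂ) (f x) * f' x).re| ≤ ‖(starRingEnd ℂ) (f x) * f' x‖ :=
            Complex.abs_re_le_norm _
        _ = ‖f x‖ * ‖f' x‖ := by
            rw [norm_mul, Complex.norm_conj]
    have hco1 : |co x| ≤ 1 := Real.abs_cos_le_one _
    have hFF : ‖f x‖ * ‖f' x‖ ≤ B * s x * M := mul_le_mul hfq hf'M (norm_nonneg _) (by positivity)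
    have hA : |co x / s x * (2 * ((starRingEnd ℂ) (f x) * f' x).re)| ≤ 2 * B * M := by
      have h1 : |co x / s x * (2 * ((starRingEnd ℂ) (f x) * f' x).re)| =
          |co x| / s x * (2 * |((starRingEnd ℂ) (f x) * f' x).re|) := by
        rw [abs_mul, abs_div, abs_of_pos hs0, abs_mul]
        norm_num
      rw [h1]
      calc |co x| / s x * (2 * |((starRingEnd ℂ) (f x) * f' x).re|)
          ≤ 1 / s x * (2 * (‖f x‖ * ‖f' x‖)) := by
            apply mul_le_mul ((div_le_div_iff_of_pos_right hs0).mpr hco1) (by linarith [hre])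
              (by positivity) (by positivity)
        _ ≤ 1 / s x * (2 * (B * s x * M)) := by
            apply mul_le_mul_of_nonneg_left _ (by positivity)
            linarith [hFF]
        _ = 2 * B * M := by field_simp
    have hq2 : q x ≤ B ^ 2 * s x ^ 2 := by
      rw [hqx]
      calc ‖f x‖ ^ 2 ≤ (B * s x) ^ 2 := pow_le_pow_left₀ (norm_nonneg _) hfq 2
        _ = B ^ 2 * s x ^ 2 := by ring
    have hE2 : |k / s x ^ 2 * q x| ≤ k * B ^ 2 := by
      rw [abs_of_nonneg (by positivity : (0:ℝ) ≤ k / s x ^ 2 * q x)]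
      calc k / s x ^ 2 * q x ≤ k / s x ^ 2 * (B ^ 2 * s x ^ 2) :=
            mul_le_mul_of_nonneg_left hq2 (by positivity)
        _ = k * B ^ 2 := by field_simp
    calc |D x| = k * |co x / s x * (2 * ((starRingEnd ℂ) (f x) * f' x).re) - k / s x ^ 2 * q x| := by
          show |k * _| = _
          rw [abs_mul, abs_of_pos hk]
      _ ≤ k * (|co x / s x * (2 * ((starRingEnd ℂ) (f x) * f' x).re)| + |k / s x ^ 2 * q x|) :=
          mul_le_mul_of_nonneg_left (abs_sub _ _) hk.le
      _ ≤ k * (2 * B * M + k * B ^ 2) := mul_le_mul_of_nonneg_left (add_le_add hA hE2) hk.le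
      _ = C0 := rfl
  -- continuity of D on the open interval
  have hcontD : ContinuousOn D (Set.Ioo c d) := by
    intro x hx
    have hsx : s x ≠ 0 := (hspos x hx).ne'
    have hmem : Set.Icc c d ∈ nhds x := Icc_mem_nhds hx.1 hx.2
    have hfx : ContinuousAt f x := (hderiv x (Ioo_subset_Icc_self hx)).continuousAt
    have hf'x : ContinuousAt f' x := hcont.continuousAt hmem
    have hcos : Continuous co := Real.continuous_cos.comp
      (continuous_const.mul (continuous_id.sub continuous_const))
    have hsin : Continuous s := Real.continuous_sin.comp
      (continuous_const.mul (continuous_id.sub continuous_const))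
    have hqx : ContinuousAt q x := hfx.norm.pow 2
    have hrex : ContinuousAt (fun y => ((starRingEnd ℂ) (f y) * f' y).re) x :=
      Complex.continuous_re.continuousAt.comp ((Complex.continuous_conj.continuousAt.comp hfx).mul hf'x)
    apply ContinuousAt.continuousWithinAt
    exact continuousAt_const.mul
      (((hcos.continuousAt.div hsin.continuousAt hsx).mul (continuousAt_const.mul hrex)).sub
        ((continuousAt_const.div (hsin.continuousAt.pow 2) (pow_ne_zero 2 hsx)).mul hqx))
  -- interval integrability of D
  have hDint : IntervalIntegrable D volume c d := by
    rw [intervalIntegrable_iff_integrableOn_Ioc_of_le hcd.le]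
    have hmeas : AEStronglyMeasurable D (volume.restrict (Set.Ioc c d)) := by
      have := hcontD.aestronglyMeasurable (μ := volume) measurableSet_Ioo
      rwa [Measure.restrict_congr_set Ioo_ae_eq_Ioc] at this
    refine ⟨hmeas, ?_⟩
    apply HasFiniteIntegral.restrict_of_bounded (C := C0) measure_Ioc_lt_top
    rw [← Measure.restrict_congr_set Ioo_ae_eq_Ioc]
    exact (ae_restrict_iff' measurableSet_Ioo).2 (Filter.Eventually.of_forall fun x hx => by
      simpa [Real.norm_eq_abs] using hDb x hx)
  -- FTC: the integral of D vanishes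
  have hFTC : ∫ x in c..d, D x = 0 := by
    rw [integral_eq_sub_of_hasDeriv_right_of_le hcd.le hconth
      (fun x hx => (hhderiv x hx).hasDerivWithinAt) hDint, hhd, hhc, sub_zero]
  -- the pointwise inequality
  have hpt : ∀ x ∈ Set.Ioo c d, k ^ 2 * q x ≤ ‖f' x‖ ^ 2 - D x := by
    intro x hx
    have hs0 := hspos x hx
    have hpy : s x ^ 2 + co x ^ 2 = 1 := Real.sin_sq_add_cos_sq _
    set r : ℝ := k * (co x / s x) with hr_def
    have hid : ‖f' x - (r : ℂ) * f x‖ ^ 2 =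
        ‖f' x‖ ^ 2 - 2 * r * ((starRingEnd ℂ) (f x) * f' x).re + r ^ 2 * ‖f x‖ ^ 2 := by
      rw [Complex.sq_norm, Complex.sq_norm, Complex.sq_norm]
      simp [Complex.normSq_apply, Complex.mul_re, Complex.mul_im, Complex.sub_re, Complex.sub_im,
        Complex.ofReal_re, Complex.ofReal_im, Complex.conj_re, Complex.conj_im]
      ring
    have h0 : (0:ℝ) ≤ ‖f' x - (r : ℂ) * f x‖ ^ 2 := by positivity
    rw [hid] at h0
    have hqx : q x = ‖f x‖ ^ 2 := rfl
    have key : ‖f' x‖ ^ 2 - D x - k ^ 2 * q x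
        = ‖f' x‖ ^ 2 - 2 * r * ((starRingEnd ℂ) (f x) * f' x).re + r ^ 2 * ‖f x‖ ^ 2 := by
      simp only [hD_def, hr_def, hqx]
      field_simp
      linear_combination (-(k ^ 2 * ‖f x‖ ^ 2)) * hpy
    linarith [h0, key]
  -- integrability of the continuous integrands
  have huIcc : Set.uIcc c d = Set.Icc c d := Set.uIcc_of_le hcd.le
  have hqint : IntervalIntegrable q volume c d := by
    apply ContinuousOn.intervalIntegrable
    rw [huIcc]; exact hfc.norm.pow 2
  have hf'int : IntervalIntegrable (fun x => ‖f' x‖ ^ 2) volume c d := by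
    apply ContinuousOn.intervalIntegrable
    rw [huIcc]; exact hcont.norm.pow 2
  have hmono : ∫ x in c..d, k ^ 2 * q x ≤ ∫ x in c..d, (‖f' x‖ ^ 2 - D x) := by
    apply integral_mono_ae_restrict hcd.le (hqint.const_mul _) (hf'int.sub hDint)
    rw [← Measure.restrict_congr_set Ioo_ae_eq_Icc]
    exact (ae_restrict_iff' measurableSet_Ioo).2 (Filter.Eventually.of_forall fun x hx => hpt x hx)
  rw [integral_sub hf'int hDint, hFTC, sub_zero, intervalIntegral.integral_const_mul] at hmono
  exact hmono

/-- Wirtinger's inequality applied on each subinterval of a partition whose points are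
zeros of `f`, with gaps at most `δ`. -/
theorem wirtinger_partition (a b δ : ℝ) (hδ : 0 < δ) (N : ℕ) (t : ℕ → ℝ)
    (ht0 : t 0 = a) (htN : t (N + 1) = b)
    (hmono : ∀ n ≤ N, t n ≤ t (n + 1))
    (hgap : ∀ n ≤ N, t (n + 1) - t n ≤ δ)
    (f f' : ℝ → ℂ)
    (hderiv : ∀ x ∈ Set.Icc a b, HasDerivAt f (f' x) x)
    (hcont : ContinuousOn f' (Set.Icc a b))
    (hzero : ∀ n ≤ N + 1, f (t n) = 0) :
    ∫ x in a..b, ‖f x‖ ^ 2 ≤ (δ / Real.pi) ^ 2 * ∫ x in a..b, ‖f' x‖ ^ 2 := by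
  have hstep : ∀ n m : ℕ, n ≤ m → m ≤ N + 1 → t n ≤ t m := by
    intro n m hnm hm
    induction hnm with
    | refl => exact le_rfl
    | @step m' h ih =>
        exact (ih (by omega)).trans (hmono m' (by omega))
  have hsub : ∀ n ≤ N, Set.Icc (t n) (t (n + 1)) ⊆ Set.Icc a b := by
    intro n hn
    apply Set.Icc_subset_Icc
    · rw [← ht0]; exact hstep 0 n (Nat.zero_le _) (by omega)
    · rw [← htN]; exact hstep (n + 1) (N + 1) (by omega) le_rfl
  have hfc : ContinuousOn f (Set.Icc a b) := fun x hx =>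
    (hderiv x hx).continuousAt.continuousWithinAt
  have hseg : ∀ n ≤ N, ∫ x in t n..t (n + 1), ‖f x‖ ^ 2 ≤
      (δ / π) ^ 2 * ∫ x in t n..t (n + 1), ‖f' x‖ ^ 2 := by
    intro n hn
    have hcd : t n ≤ t (n + 1) := hmono n hn
    rcases eq_or_lt_of_le hcd with heq | hlt
    · rw [← heq]
      simp
    · have hW := wirtinger_single (t n) (t (n + 1)) hlt f f'
        (fun x hx => hderiv x (hsub n hn hx)) (hcont.mono (hsub n hn))
        (hzero n (by omega)) (hzero (n + 1) (by omega))
      have hY : 0 ≤ ∫ x in t n..t (n + 1), ‖f' x‖ ^ 2 :=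
        intervalIntegral.integral_nonneg hcd (fun x _ => by positivity)
      have hL : 0 < t (n + 1) - t n := sub_pos.2 hlt
      calc ∫ x in t n..t (n + 1), ‖f x‖ ^ 2
          = ((t (n + 1) - t n) / π) ^ 2 * ((π / (t (n + 1) - t n)) ^ 2
              * ∫ x in t n..t (n + 1), ‖f x‖ ^ 2) := by
            rw [← mul_assoc, div_pow, div_pow, div_mul_div_comm]
            rw [show (t (n + 1) - t n) ^ 2 * π ^ 2 = π ^ 2 * (t (n + 1) - t n) ^ 2 by ring]
            rw [div_self (by positivity), one_mul]
        _ ≤ ((t (n + 1) - t n) / π) ^ 2 * ∫ x in t n..t (n + 1), ‖f' x‖ ^ 2 :=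
            mul_le_mul_of_nonneg_left hW (by positivity)
        _ ≤ (δ / π) ^ 2 * ∫ x in t n..t (n + 1), ‖f' x‖ ^ 2 := by
            apply mul_le_mul_of_nonneg_right _ hY
            have h1 : (t (n + 1) - t n) / π ≤ δ / π :=
              (div_le_div_iff_of_pos_right pi_pos).mpr (hgap n hn)
            exact pow_le_pow_left₀ (by positivity) h1 2
  -- sum over the subintervals
  have hint1 : ∀ i < N + 1, IntervalIntegrable (fun x => ‖f x‖ ^ 2) volume (t i) (t (i + 1)) := by
    intro i hi
    apply ContinuousOn.intervalIntegrable
    rw [Set.uIcc_of_le (hmono i (by omega))]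
    exact (hfc.norm.pow 2).mono (hsub i (by omega))
  have hint2 : ∀ i < N + 1, IntervalIntegrable (fun x => ‖f' x‖ ^ 2) volume (t i) (t (i + 1)) := by
    intro i hi
    apply ContinuousOn.intervalIntegrable
    rw [Set.uIcc_of_le (hmono i (by omega))]
    exact (hcont.norm.pow 2).mono (hsub i (by omega))
  have hsum1 := intervalIntegral.sum_integral_adjacent_intervals hint1
  have hsum2 := intervalIntegral.sum_integral_adjacent_intervals hint2
  rw [ht0, htN] at hsum1 hsum2
  rw [← hsum1, ← hsum2, Finset.mul_sum]
  apply Finset.sum_le_sum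
  intro i hi
  exact hseg i (by simpa using Nat.lt_succ_iff.mp (Finset.mem_range.mp hi))
end

section
/- Let g:[T, 2T] → ℝ be continuous and nonnegative, and suppose the zeros of a continuously differentiable function f:[T,2T] → ℂ in [T,2T], listed in increasing order as t̃_1 ≤ ... ≤ t̃_N (together with t̃_0 = T, t̃_{N+1} = 2T), satisfy t̃_{n+1} − t̃_n ≤ δ for all n, and f(T) = f(2T) = 0. If L²/κ² · (∫_T^{2T}|f|²)/(∫_T^{2T}|f′|²) > 1 where δ = κπ/L and ∫_T^{2T}|f′|² > 0, we obtain a contradiction; hence some gap between consecutive zeros of f in [T,2T] exceeds κπ/L. -/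
open MeasureTheory intervalIntegral

lemma hnorm' (z : ℂ) : ‖z‖^2 = z.re*z.re + z.im*z.im := by
  rw [Complex.sq_norm, Complex.normSq_apply]


lemma cot_le_bound (y : ℝ) (h1 : 0 < y) (h2 : y < Real.pi/2) :
    Real.cos y / Real.sin y ≤ 1 / y := by
  have hs : 0 < Real.sin y := Real.sin_pos_of_pos_of_lt_pi h1 (by linarith [Real.pi_pos])
  have hc : 0 < Real.cos y := Real.cos_pos_of_mem_Ioo ⟨by linarith, h2⟩
  have ht := Real.lt_tan h1 h2
  rw [Real.tan_eq_sin_div_cos, lt_div_iff₀ hc] at ht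
  rw [div_le_div_iff₀ hs h1]
  nlinarith

lemma bdry_upper (c ε M hv u : ℝ) (hc : 0 < c) (hε : 0 < ε) (hu0 : 0 ≤ u)
    (hu : u ≤ (M*ε)^2) (hh : hv ≤ 1/(c*ε)) : c * hv * u ≤ M^2 * ε := by
  have h1 : c * hv * u ≤ c * (1/(c*ε)) * u := by
    have := mul_le_mul_of_nonneg_right (mul_le_mul_of_nonneg_left hh hc.le) hu0
    linarith
  have h2 : c * (1/(c*ε)) = 1/ε := by field_simp
  rw [h2] at h1
  have h3 : (1/ε) * u ≤ (1/ε)*(M*ε)^2 := mul_le_mul_of_nonneg_left hu (by positivity)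
  have h4 : (1/ε)*(M*ε)^2 = M^2*ε := by field_simp
  linarith

lemma bdry_lower (c ε M hv u : ℝ) (hc : 0 < c) (hε : 0 < ε) (hu0 : 0 ≤ u)
    (hu : u ≤ (M*ε)^2) (hh : -(1/(c*ε)) ≤ hv) : -(M^2 * ε) ≤ c * hv * u := by
  have h1 : c * (-(1/(c*ε))) * u ≤ c * hv * u := by
    have := mul_le_mul_of_nonneg_right (mul_le_mul_of_nonneg_left hh hc.le) hu0
    linarith
  have h2 : c * (-(1/(c*ε))) = -(1/ε) := by field_simp
  rw [h2] at h1
  have h3 : (1/ε) * u ≤ (1/ε)*(M*ε)^2 := mul_le_mul_of_nonneg_left hu (by positivity)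
  have h4 : (1/ε)*(M*ε)^2 = M^2*ε := by field_simp
  nlinarith

lemma sq_abs_bound (x y M P c : ℝ) (hx0 : 0 ≤ x) (hx : x ≤ M) (hy0 : 0 ≤ y) (hy : y ≤ P) :
    |x^2 - c^2*y^2| ≤ M^2 + c^2*P^2 := by
  have hy2 : y^2 ≤ P^2 := by nlinarith
  have hx2 : x^2 ≤ M^2 := by nlinarith
  have h5 : c^2*y^2 ≤ c^2*P^2 := mul_le_mul_of_nonneg_left hy2 (sq_nonneg c)
  rw [abs_le]
  constructor <;> nlinarith [sq_nonneg x, mul_nonneg (sq_nonneg c) (sq_nonneg y)]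

lemma eps_limit (I C' l : ℝ) (hl : 0 < l) (hC0 : 0 ≤ C')
    (hKey : ∀ ε : ℝ, 0 < ε → ε < l/2 → -C'*ε ≤ I) : 0 ≤ I := by
  by_contra hI
  push_neg at hI
  set ε := min (l/4) ((-I)/(C'+1)) with hε'
  have hε : 0 < ε := lt_min (by linarith) (div_pos (by linarith) (by linarith))
  have hε2 : ε < l/2 := (min_le_left _ _).trans_lt (by linarith)
  have hk := hKey ε hε hε2
  have h2 : ε ≤ (-I)/(C'+1) := min_le_right _ _
  have h3 : C' * ε ≤ C' * ((-I)/(C'+1)) := mul_le_mul_of_nonneg_left h2 hC0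
  have h4 : C' * ((-I)/(C'+1)) < -I := by
    rw [mul_div_assoc', div_lt_iff₀ (by linarith)]
    nlinarith
  linarith

lemma key_deriv (a b : ℝ) (c : ℝ) (f f' : ℝ → ℂ)
    (hderiv : ∀ x ∈ Set.Icc a b, HasDerivAt f (f' x) x)
    (x : ℝ) (hx : x ∈ Set.Ioo a b) (hs : 0 < Real.sin (c*(x-a))) :
    HasDerivAt (fun y => c * (Real.cos (c*(y-a))/Real.sin (c*(y-a))) * ‖f y‖^2)
      (‖f' x‖^2 - c^2*‖f x‖^2
        - ‖f' x - (↑(c * (Real.cos (c*(x-a))/Real.sin (c*(x-a)))) : ℂ) * f x‖^2) x := by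
  have hxI : x ∈ Set.Icc a b := Set.mem_Icc.2 ⟨hx.1.le, hx.2.le⟩
  have hθ : HasDerivAt (fun y => c*(y-a)) c x := by
    simpa using ((hasDerivAt_id x).sub_const a).const_mul c
  have hcos : HasDerivAt (fun y => Real.cos (c*(y-a))) (-Real.sin (c*(x-a)) * c) x :=
    (Real.hasDerivAt_cos _).comp x hθ
  have hsin : HasDerivAt (fun y => Real.sin (c*(y-a))) (Real.cos (c*(x-a)) * c) x :=
    (Real.hasDerivAt_sin _).comp x hθ
  have hh : HasDerivAt (fun y => Real.cos (c*(y-a))/Real.sin (c*(y-a)))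
      ((-Real.sin (c*(x-a)) * c * Real.sin (c*(x-a))
        - Real.cos (c*(x-a)) * (Real.cos (c*(x-a)) * c)) / (Real.sin (c*(x-a)))^2) x :=
    hcos.div hsin hs.ne'
  have hp : HasDerivAt (fun y => (f y).re) ((f' x).re) x :=
    Complex.reCLM.hasFDerivAt.comp_hasDerivAt x (hderiv x hxI)
  have hq : HasDerivAt (fun y => (f y).im) ((f' x).im) x :=
    Complex.imCLM.hasFDerivAt.comp_hasDerivAt x (hderiv x hxI)
  have hu : HasDerivAt (fun y => (f y).re*(f y).re + (f y).im*(f y).im)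
      ((f' x).re*(f x).re + (f x).re*(f' x).re + ((f' x).im*(f x).im + (f x).im*(f' x).im)) x :=
    (hp.mul hp).add (hq.mul hq)
  have hG := (hh.const_mul c).mul hu
  simp only [hnorm']
  refine hG.congr_deriv ?_
  simp only [Complex.sub_re, Complex.sub_im, Complex.mul_re, Complex.mul_im,
    Complex.ofReal_re, Complex.ofReal_im]
  have hpyth := Real.sin_sq_add_cos_sq (c*(x-a))
  field_simp
  ring_nf

lemma wirtinger (a b : ℝ) (hab : a < b) (f f' : ℝ → ℂ)
    (hderiv : ∀ x ∈ Set.Icc a b, HasDerivAt f (f' x) x)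
    (hcont : ContinuousOn f' (Set.Icc a b))
    (ha : f a = 0) (hb : f b = 0) :
    (∫ x in a..b, ‖f x‖ ^ 2) ≤ ((b - a) / Real.pi) ^ 2 * ∫ x in a..b, ‖f' x‖ ^ 2 := by
  set l := b - a with hl'
  have hl : 0 < l := sub_pos.2 hab
  set c := Real.pi / l with hc'
  have hc : 0 < c := div_pos Real.pi_pos hl
  have hcl : c * l = Real.pi := by rw [hc']; field_simp
  -- continuity of f
  have hfc : ContinuousOn f (Set.Icc a b) := fun x hx =>
    (hderiv x hx).continuousAt.continuousWithinAt
  -- bound on f'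
  obtain ⟨C, hC⟩ := isCompact_Icc.exists_bound_of_continuousOn hcont
  set M := max C 0 with hM'
  have hM0 : 0 ≤ M := le_max_right _ _
  have hM : ∀ x ∈ Set.Icc a b, ‖f' x‖ ≤ M := fun x hx => (hC x hx).trans (le_max_left _ _)
  -- Lipschitz-type bounds
  have hlip : ∀ x ∈ Set.Icc a b, ∀ y ∈ Set.Icc a b, ‖f y - f x‖ ≤ M * ‖y - x‖ := by
    intro x hx y hy
    exact (convex_Icc a b).norm_image_sub_le_of_norm_hasDerivWithin_le
      (fun z hz => (hderiv z hz).hasDerivWithinAt) hM hx hy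
  have hfa : ∀ x ∈ Set.Icc a b, ‖f x‖ ≤ M * (x - a) := by
    intro x hx
    have := hlip a (Set.left_mem_Icc.2 hab.le) x hx
    rwa [ha, sub_zero, Real.norm_eq_abs, abs_of_nonneg (by linarith [hx.1])] at this
  have hfb : ∀ x ∈ Set.Icc a b, ‖f x‖ ≤ M * (b - x) := by
    intro x hx
    have := hlip b (Set.right_mem_Icc.2 hab.le) x hx
    have h2 : ‖f x‖ ≤ M * ‖x - b‖ := by rwa [hb, sub_zero] at this
    rwa [Real.norm_eq_abs, abs_sub_comm, abs_of_nonneg (by linarith [hx.2])] at h2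
  have hsin : ∀ x ∈ Set.Ioo a b, 0 < Real.sin (c*(x-a)) := by
    intro x hx
    apply Real.sin_pos_of_pos_of_lt_pi (mul_pos hc (by linarith [hx.1]))
    have : c * (x - a) < c * l := by
      apply mul_lt_mul_of_pos_left _ hc
      rw [hl']; linarith [hx.2]
    linarith [hcl ▸ this]
  set g₀ : ℝ → ℝ := fun x => ‖f' x‖^2 - c^2 * ‖f x‖^2 with hg₀'
  have hg₀cont : ContinuousOn g₀ (Set.Icc a b) := by
    apply ContinuousOn.sub
    · exact (hcont.norm.pow 2)
    · exact ((hfc.norm.pow 2).const_smul (c^2 : ℝ)).congr (fun x _ => by simp [smul_eq_mul])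
  set K := M^2 + c^2*(M*l)^2 with hK'
  have hK0 : 0 ≤ K := by positivity
  have hg₀bdd : ∀ x ∈ Set.Icc a b, ‖g₀ x‖ ≤ K := by
    intro x hx
    have h1 : ‖f' x‖ ≤ M := hM x hx
    have h2 : ‖f x‖ ≤ M * l := by
      have h3 : x - a ≤ l := by rw [hl']; linarith [hx.2]
      exact (hfa x hx).trans (mul_le_mul_of_nonneg_left h3 hM0)
    rw [Real.norm_eq_abs, hg₀', hK']
    exact sq_abs_bound _ _ _ _ _ (norm_nonneg _) h1 (norm_nonneg _) h2
  -- the main ε-inequality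
  have hIint : ∀ u v, u ∈ Set.Icc a b → v ∈ Set.Icc a b →
      IntervalIntegrable g₀ volume u v := by
    intro u v hu hv
    exact (hg₀cont.mono (Set.uIcc_subset_Icc hu hv)).intervalIntegrable
  set I := ∫ x in a..b, g₀ x with hI'
  have hKey : ∀ ε : ℝ, 0 < ε → ε < l/2 → -(2*K + 2*M^2)*ε ≤ I := by
    intro ε hε hε2
    set aε := a + ε with haε'
    set bε := b - ε with hbε'
    have haεb : aε < bε := by simp [haε', hbε']; linarith
    have haεI : aε ∈ Set.Icc a b := by constructor <;> simp [haε'] <;> linarith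
    have hbεI : bε ∈ Set.Icc a b := by constructor <;> simp [hbε'] <;> linarith
    have hsub : Set.Icc aε bε ⊆ Set.Ioo a b := by
      intro x hx; exact ⟨by linarith [hx.1], by linarith [hx.2]⟩
    -- FTC
    set h : ℝ → ℝ := fun x => Real.cos (c*(x-a))/Real.sin (c*(x-a)) with hh'
    have hhcont : ContinuousOn h (Set.Icc aε bε) := by
      apply ContinuousOn.div
      · exact (Real.continuous_cos.comp
          (continuous_const.mul (continuous_id.sub continuous_const))).continuousOn
      · exact (Real.continuous_sin.comp
          (continuous_const.mul (continuous_id.sub continuous_const))).continuousOn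
      · exact fun x hx => (hsin x (hsub hx)).ne'
    have hsubI : Set.Icc aε bε ⊆ Set.Icc a b := fun x hx => Set.Ioo_subset_Icc_self (hsub hx)
    have hG2cont : ContinuousOn (fun x => ‖f' x - (↑(c * h x) : ℂ) * f x‖^2) (Set.Icc aε bε) := by
      apply ContinuousOn.pow
      apply ContinuousOn.norm
      apply ContinuousOn.sub (hcont.mono hsubI)
      apply ContinuousOn.mul _ (hfc.mono hsubI)
      exact Complex.continuous_ofReal.comp_continuousOn (continuousOn_const.mul hhcont)
    have hint1 : IntervalIntegrable (fun x => g₀ x - ‖f' x - (↑(c * h x) : ℂ) * f x‖^2)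
        volume aε bε := by
      apply ContinuousOn.intervalIntegrable
      rw [Set.uIcc_of_le haεb.le]
      exact (hg₀cont.mono hsubI).sub hG2cont
    have hFTC : ∫ x in aε..bε, (g₀ x - ‖f' x - (↑(c * h x) : ℂ) * f x‖^2)
        = (c * h bε * ‖f bε‖^2) - (c * h aε * ‖f aε‖^2) := by
      refine intervalIntegral.integral_eq_sub_of_hasDerivAt
        (f := fun x => c * h x * ‖f x‖^2) (fun x hx => ?_) hint1
      rw [Set.uIcc_of_le haεb.le] at hx
      exact key_deriv a b c f f' hderiv x (hsub hx) (hsin x (hsub hx))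
    have hint2 : IntervalIntegrable (fun x => ‖f' x - (↑(c * h x) : ℂ) * f x‖^2)
        volume aε bε := by
      apply ContinuousOn.intervalIntegrable
      rwa [Set.uIcc_of_le haεb.le]
    have hsplit : ∫ x in aε..bε, (g₀ x - ‖f' x - (↑(c * h x) : ℂ) * f x‖^2)
        = (∫ x in aε..bε, g₀ x) - ∫ x in aε..bε, ‖f' x - (↑(c * h x) : ℂ) * f x‖^2 :=
      intervalIntegral.integral_sub (hIint aε bε haεI hbεI) hint2
    have hsqnn : 0 ≤ ∫ x in aε..bε, ‖f' x - (↑(c * h x) : ℂ) * f x‖^2 :=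
      intervalIntegral.integral_nonneg haεb.le (fun x _ => by positivity)
    -- boundary bounds
    have hcε : 0 < c * ε := by positivity
    have hcε2 : c * ε < Real.pi / 2 := by
      have h := mul_lt_mul_of_pos_left hε2 hc
      rw [show c*(l/2) = c*l/2 by ring, hcl] at h
      exact h
    have hcot : Real.cos (c*ε) / Real.sin (c*ε) ≤ 1 / (c * ε) := cot_le_bound _ hcε hcε2
    have haεval : c * (aε - a) = c * ε := by simp [haε']
    have hbεval : c * (bε - a) = Real.pi - c * ε := by
      simp [hbε', hl'] at *; rw [← hcl]; ring
    have hGa : c * h aε * ‖f aε‖^2 ≤ M^2 * ε := by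
      have hfa' : ‖f aε‖ ≤ M * ε := by simpa [haε'] using hfa aε haεI
      have hu1 : ‖f aε‖^2 ≤ (M*ε)^2 := pow_le_pow_left₀ (norm_nonneg _) hfa' 2
      have hha : h aε ≤ 1 / (c*ε) := by rw [hh']; simp only; rw [haεval]; exact hcot
      exact bdry_upper c ε M (h aε) _ hc hε (sq_nonneg _) hu1 hha
    have hGb : -(M^2 * ε) ≤ c * h bε * ‖f bε‖^2 := by
      have hfb' : ‖f bε‖ ≤ M * ε := by simpa [hbε'] using hfb bε hbεI
      have hu1 : ‖f bε‖^2 ≤ (M*ε)^2 := pow_le_pow_left₀ (norm_nonneg _) hfb' 2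
      have hhb : -(1/(c*ε)) ≤ h bε := by
        rw [hh']; simp only; rw [hbεval, Real.cos_pi_sub, Real.sin_pi_sub]
        rw [neg_div, neg_le_neg_iff]
        exact hcot
      exact bdry_lower c ε M (h bε) _ hc hε (sq_nonneg _) hu1 hhb
    have hmid : -(2*(M^2*ε)) ≤ ∫ x in aε..bε, g₀ x := by
      have := hFTC ▸ hsplit
      linarith
    -- tails
    have htail1 : |∫ x in a..aε, g₀ x| ≤ K * ε := by
      have := intervalIntegral.norm_integral_le_of_norm_le_const
        (a := a) (b := aε) (C := K) (f := g₀) ?_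
      · rw [Real.norm_eq_abs] at this
        calc |∫ x in a..aε, g₀ x| ≤ K * |aε - a| := this
          _ = K * ε := by rw [show aε - a = ε by simp [haε'], abs_of_pos hε]
      · intro x hx
        rw [Set.uIoc_of_le (by simp [haε']; linarith)] at hx
        exact hg₀bdd x ⟨hx.1.le, by simp [haε'] at hx ⊢; linarith [hx.2]⟩
    have htail2 : |∫ x in bε..b, g₀ x| ≤ K * ε := by
      have := intervalIntegral.norm_integral_le_of_norm_le_const
        (a := bε) (b := b) (C := K) (f := g₀) ?_
      · rw [Real.norm_eq_abs] at this
        calc |∫ x in bε..b, g₀ x| ≤ K * |b - bε| := this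
          _ = K * ε := by rw [show b - bε = ε by simp [hbε'], abs_of_pos hε]
      · intro x hx
        rw [Set.uIoc_of_le (by simp [hbε']; linarith)] at hx
        exact hg₀bdd x ⟨by simp [hbε'] at hx ⊢; linarith [hx.1], hx.2⟩
    have hdecomp : I = (∫ x in a..aε, g₀ x) + (∫ x in aε..bε, g₀ x) + ∫ x in bε..b, g₀ x := by
      rw [hI']
      rw [← intervalIntegral.integral_add_adjacent_intervals (hIint a aε ⟨le_refl a, hab.le⟩ haεI)
        (hIint aε b haεI ⟨hab.le, le_refl b⟩)]
      rw [← intervalIntegral.integral_add_adjacent_intervals (hIint aε bε haεI hbεI)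
        (hIint bε b hbεI ⟨hab.le, le_refl b⟩)]
      ring
    have := abs_le.1 htail1
    have := abs_le.1 htail2
    rw [hdecomp]; linarith
  -- conclude I ≥ 0
  have hI0 : 0 ≤ I := eps_limit I (2*K + 2*M^2) l hl (by positivity) hKey
  -- final algebra
  have hintf : IntervalIntegrable (fun x => ‖f x‖^2) volume a b :=
    ((hfc.norm.pow 2).mono (by rw [Set.uIcc_of_le hab.le])).intervalIntegrable
  have hintf' : IntervalIntegrable (fun x => ‖f' x‖^2) volume a b :=
    ((hcont.norm.pow 2).mono (by rw [Set.uIcc_of_le hab.le])).intervalIntegrable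
  have hIeq : I = (∫ x in a..b, ‖f' x‖^2) - c^2 * ∫ x in a..b, ‖f x‖^2 := by
    rw [hI', hg₀']
    rw [intervalIntegral.integral_sub hintf' (hintf.const_mul (c^2))]
    rw [intervalIntegral.integral_const_mul]
  have hc2 : ((b-a)/Real.pi)^2 = 1/c^2 := by
    rw [hc']; field_simp; rw [hl']
  rw [hc2]
  rw [hIeq] at hI0
  rw [div_mul_eq_mul_div, le_div_iff₀ (by positivity)]
  linarith [hI0]

/-- The Hall–Bredberg gap-detection principle: if `f` is continuously differentiable on
`[T, 2T]`, vanishes at `T`, `2T` and at the points `t̃_1 ≤ … ≤ t̃_N`, and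
`L²/κ² · ∫|f|²/∫|f'|² > 1`, then some gap between consecutive points of the list
(augmented by the endpoints) exceeds `κπ/L`. -/
theorem gap_detection (T L κ : ℝ) (hT : 0 < T) (hL : 0 < L) (hκ : 0 < κ)
    (N : ℕ) (t : ℕ → ℝ) (ht0 : t 0 = T) (htN : t (N + 1) = 2 * T)
    (hmono : ∀ n ≤ N, t n ≤ t (n + 1))
    (f f' : ℝ → ℂ)
    (hderiv : ∀ x ∈ Set.Icc T (2 * T), HasDerivAt f (f' x) x)
    (hcont : ContinuousOn f' (Set.Icc T (2 * T)))
    (hzero : ∀ n ≤ N + 1, f (t n) = 0)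
    (hpos : 0 < ∫ x in T..(2 * T), ‖f' x‖ ^ 2)
    (hratio : 1 < L ^ 2 / κ ^ 2 *
        ((∫ x in T..(2 * T), ‖f x‖ ^ 2) / ∫ x in T..(2 * T), ‖f' x‖ ^ 2)) :
    ∃ n ≤ N, κ * Real.pi / L < t (n + 1) - t n := by
  by_contra hcon
  push_neg at hcon
  -- monotonicity facts
  have hmono2 : ∀ m n : ℕ, m ≤ n → n ≤ N + 1 → t m ≤ t n := by
    intro m n hmn hn
    induction n with
    | zero => simp_all
    | succ k ih =>
      rcases Nat.lt_or_ge m (k+1) with h | h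
      · have h1 : t m ≤ t k := ih (Nat.lt_succ_iff.1 h) (by omega)
        exact h1.trans (hmono k (by omega))
      · have : m = k + 1 := le_antisymm hmn h
        rw [this]
  have htmem : ∀ n ≤ N + 1, t n ∈ Set.Icc T (2*T) := by
    intro n hn
    constructor
    · rw [← ht0]; exact hmono2 0 n (Nat.zero_le _) hn
    · rw [← htN]; exact hmono2 n (N+1) hn (le_refl _)
  have hfc : ContinuousOn f (Set.Icc T (2*T)) := fun x hx =>
    (hderiv x hx).continuousAt.continuousWithinAt
  have hintf : ∀ k, k ≤ N → IntervalIntegrable (fun x => ‖f x‖^2) volume (t k) (t (k+1)) := by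
    intro k hk
    apply ContinuousOn.intervalIntegrable
    apply (hfc.norm.pow 2).mono
    exact Set.uIcc_subset_Icc (htmem k (by omega)) (htmem (k+1) (by omega))
  have hintf' : ∀ k, k ≤ N → IntervalIntegrable (fun x => ‖f' x‖^2) volume (t k) (t (k+1)) := by
    intro k hk
    apply ContinuousOn.intervalIntegrable
    apply (hcont.norm.pow 2).mono
    exact Set.uIcc_subset_Icc (htmem k (by omega)) (htmem (k+1) (by omega))
  -- telescoping
  have hsumf : ∑ k ∈ Finset.range (N+1), ∫ x in (t k)..(t (k+1)), ‖f x‖^2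
      = ∫ x in T..(2*T), ‖f x‖^2 := by
    rw [intervalIntegral.sum_integral_adjacent_intervals (fun k hk => hintf k (by omega))]
    rw [ht0, htN]
  have hsumf' : ∑ k ∈ Finset.range (N+1), ∫ x in (t k)..(t (k+1)), ‖f' x‖^2
      = ∫ x in T..(2*T), ‖f' x‖^2 := by
    rw [intervalIntegral.sum_integral_adjacent_intervals (fun k hk => hintf' k (by omega))]
    rw [ht0, htN]
  -- per interval bound
  have hper : ∀ k ≤ N, (∫ x in (t k)..(t (k+1)), ‖f x‖^2)
      ≤ (κ/L)^2 * ∫ x in (t k)..(t (k+1)), ‖f' x‖^2 := by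
    intro k hk
    have hle : t k ≤ t (k+1) := hmono k hk
    have hBk : 0 ≤ ∫ x in (t k)..(t (k+1)), ‖f' x‖^2 :=
      intervalIntegral.integral_nonneg hle (fun x _ => sq_nonneg _)
    rcases eq_or_lt_of_le hle with heq | hlt
    · rw [← heq, intervalIntegral.integral_same, intervalIntegral.integral_same, mul_zero]
    · have hsubI : Set.Icc (t k) (t (k+1)) ⊆ Set.Icc T (2*T) :=
        Set.Icc_subset_Icc (htmem k (by omega)).1 (htmem (k+1) (by omega)).2
      have hw := wirtinger (t k) (t (k+1)) hlt f f'
        (fun x hx => hderiv x (hsubI hx)) (hcont.mono hsubI)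
        (hzero k (by omega)) (hzero (k+1) (by omega))
      have hgap : t (k+1) - t k ≤ κ * Real.pi / L := hcon k hk
      have hconst : ((t (k+1) - t k)/Real.pi)^2 ≤ (κ/L)^2 := by
        apply pow_le_pow_left₀ (div_nonneg (by linarith) Real.pi_pos.le)
        rw [div_le_div_iff₀ Real.pi_pos hL]
        calc (t (k+1) - t k) * L ≤ (κ * Real.pi / L) * L := by nlinarith
          _ = κ * Real.pi := by field_simp
      exact hw.trans (mul_le_mul_of_nonneg_right hconst hBk)
  -- sum up
  set A := ∫ x in T..(2*T), ‖f x‖^2 with hA'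
  set B := ∫ x in T..(2*T), ‖f' x‖^2 with hB'
  have hAB : A ≤ (κ/L)^2 * B := by
    rw [← hsumf, ← hsumf', Finset.mul_sum]
    apply Finset.sum_le_sum
    intro k hk
    exact hper k (by simpa using Nat.lt_succ_iff.1 (Finset.mem_range.1 hk))
  -- contradiction with hratio
  have hratio' : κ^2 * B < L^2 * A := by
    have e1 : L^2/κ^2 * (A/B) = (L^2 * A) / (κ^2 * B) := by
      rw [div_mul_div_comm]
    rw [e1, lt_div_iff₀ (by positivity)] at hratio
    linarith
  have : L^2 * A ≤ κ^2 * B := by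
    have := mul_le_mul_of_nonneg_left hAB (by positivity : (0:ℝ) ≤ L^2)
    calc L^2 * A ≤ L^2 * ((κ/L)^2 * B) := this
      _ = κ^2 * B := by field_simp
  linarith
end
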